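/- arXiv:2103.04861 — 4 statements merged into one kernel-verified Lean document; each statement's English description precedes it below -/
import Mathlib

section
/- For every integer n ≥ 1 and every r > 0, the modified Bessel functions of the first kind satisfy I_{n-1}(r) · I_{n+1}(r) < I_n(r)². -/
open Real Filter Set

/-- Modified Bessel function of the first kind of (integer) order `n`. -/
noncomputable def besselI (n : ℕ) (r : ℝ) : ℝ :=
  ∑' k : ℕ, (1 / (k.factorial * Real.Gamma (n + k + 1))) * (r / 2) ^ (n + 2 * k)

/-- `P n r = I_{n+1}(r) / (r * I_n(r))`. -/
noncomputable def P (n : ℕ) (r : ℝ) : ℝ := besselI (n + 1) r / (r * besselI n r)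


noncomputable def bTerm (m : ℕ) (r : ℝ) (k : ℕ) : ℝ :=
  (1 / (k.factorial * (m + k).factorial)) * (r / 2) ^ (m + 2 * k)

lemma besselI_eq' (m : ℕ) (r : ℝ) :
    (∑' k : ℕ, (1 / (k.factorial * Real.Gamma (m + k + 1))) * (r / 2) ^ (m + 2 * k))
      = ∑' k, bTerm m r k := by
  refine tsum_congr fun k => ?_
  unfold bTerm
  rw [show ((m : ℝ) + k + 1) = ((m + k : ℕ) : ℝ) + 1 by push_cast; ring,
    Real.Gamma_nat_eq_factorial]

lemma bTerm_norm_summable (m : ℕ) (r : ℝ) : Summable fun k => ‖bTerm m r k‖ := by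
  have h := (Real.summable_pow_div_factorial ((|r| / 2) ^ 2)).mul_left ((|r| / 2) ^ m)
  refine h.of_nonneg_of_le (fun k => norm_nonneg _) fun k => ?_
  unfold bTerm
  simp only [norm_mul, norm_div, norm_pow, Real.norm_eq_abs, abs_one, abs_two]
  rw [abs_of_nonneg (show (0:ℝ) ≤ (k.factorial : ℝ) by positivity),
    abs_of_nonneg (show (0:ℝ) ≤ ((m + k).factorial : ℝ) by positivity)]
  have h1 : 1 / ((k.factorial : ℝ) * (m + k).factorial) ≤ 1 / k.factorial := by
    apply div_le_div_of_nonneg_left (by norm_num) (by positivity)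
    calc (k.factorial : ℝ) = k.factorial * 1 := by ring
    _ ≤ k.factorial * (m + k).factorial := by
        gcongr
        exact_mod_cast (m + k).factorial_pos
  calc 1 / ((k.factorial : ℝ) * (m + k).factorial) * (|r| / 2) ^ (m + 2 * k)
      ≤ (1 / k.factorial) * (|r| / 2) ^ (m + 2 * k) := by gcongr
    _ = (|r| / 2) ^ m * (((|r| / 2) ^ 2) ^ k / k.factorial) := by
        rw [← pow_mul, pow_add]; ring

/-- Denominator of the paired term. -/
def dd (m k i : ℕ) : ℕ :=
  i.factorial * (k - i).factorial * (m + 1 + i).factorial * (m + 2 + (k - i)).factorial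

lemma dd_pos (m k i : ℕ) : 0 < dd m k i := by
  unfold dd; positivity

lemma dd_mono (m k a b : ℕ) (hk : a + b = k + 1) (ha : 1 ≤ a) (hb : 1 ≤ b) (hab : a ≤ b) :
    dd m k a ≤ dd m k b := by
  obtain ⟨a', rfl⟩ : ∃ a', a = a' + 1 := ⟨a - 1, by omega⟩
  obtain ⟨b', rfl⟩ : ∃ b', b = b' + 1 := ⟨b - 1, by omega⟩
  have h1 : k - (a' + 1) = b' := by omega
  have h2 : k - (b' + 1) = a' := by omega
  have h3 : m + 1 + (a' + 1) = m + 2 + a' := by omega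
  have h4 : m + 1 + (b' + 1) = m + 2 + b' := by omega
  unfold dd
  rw [h1, h2, h3, h4, Nat.factorial_succ a', Nat.factorial_succ b']
  calc (a' + 1) * a'.factorial * b'.factorial * (m + 2 + a').factorial *
        (m + 2 + b').factorial
      = (a' + 1) * (a'.factorial * b'.factorial * (m + 2 + a').factorial *
        (m + 2 + b').factorial) := by ring
    _ ≤ (b' + 1) * (a'.factorial * b'.factorial * (m + 2 + a').factorial *
        (m + 2 + b').factorial) := Nat.mul_le_mul_right _ (by omega)
    _ = (b' + 1) * b'.factorial * a'.factorial * (m + 2 + b').factorial *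
        (m + 2 + a').factorial := by ring

lemma pair_nonneg (m k a b : ℕ) (hk : a + b = k + 1) (ha : 1 ≤ a) (hb : 1 ≤ b) :
    0 ≤ ((k : ℝ) + 1 - 2 * a) * ((dd m k a : ℝ))⁻¹ +
        ((k : ℝ) + 1 - 2 * b) * ((dd m k b : ℝ))⁻¹ := by
  have key : ∀ a b : ℕ, a + b = k + 1 → 1 ≤ a → 1 ≤ b → a ≤ b →
      0 ≤ ((k : ℝ) + 1 - 2 * a) * ((dd m k a : ℝ))⁻¹ +
          ((k : ℝ) + 1 - 2 * b) * ((dd m k b : ℝ))⁻¹ := by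
    intro a b hk ha hb hab
    have hkr : (k : ℝ) + 1 = a + b := by exact_mod_cast hk.symm
    have h1 : ((k : ℝ) + 1 - 2 * a) = (b : ℝ) - a := by rw [hkr]; ring
    have h2 : ((k : ℝ) + 1 - 2 * b) = -((b : ℝ) - a) := by rw [hkr]; ring
    rw [h1, h2]
    have hba : (0 : ℝ) ≤ (b : ℝ) - a := by
      have : (a : ℝ) ≤ b := by exact_mod_cast hab
      linarith
    have hinv : ((dd m k b : ℝ))⁻¹ ≤ ((dd m k a : ℝ))⁻¹ := by
      apply inv_anti₀
      · exact_mod_cast dd_pos m k a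
      · exact_mod_cast dd_mono m k a b hk ha hb hab
    nlinarith [hinv, hba]
  rcases le_total a b with h | h
  · exact key a b hk ha hb h
  · have := key b a (by omega) hb ha h
    linarith

lemma term_eq (m k i : ℕ) (hi : i ≤ k) :
    ((i.factorial * (m + 1 + i).factorial * (k - i).factorial *
        (m + 1 + (k - i)).factorial : ℕ) : ℝ)⁻¹ -
      ((i.factorial * (m + i).factorial * (k - i).factorial *
        (m + 2 + (k - i)).factorial : ℕ) : ℝ)⁻¹
    = ((k : ℝ) + 1 - 2 * i) * ((dd m k i : ℝ))⁻¹ := by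
  unfold dd
  have hj : i + (k - i) = k := by omega
  generalize k - i = j at hj ⊢
  have hkr : (k : ℝ) = (i : ℝ) + j := by exact_mod_cast hj.symm
  rw [show m + 1 + i = (m + i) + 1 from by omega, Nat.factorial_succ (m + i),
    show m + 2 + j = (m + 1 + j) + 1 from by omega, Nat.factorial_succ (m + 1 + j)]
  have f1 : (i.factorial : ℝ) ≠ 0 := by positivity
  have f2 : (j.factorial : ℝ) ≠ 0 := by positivity
  have f3 : ((m + i).factorial : ℝ) ≠ 0 := by positivity
  have f4 : ((m + 1 + j).factorial : ℝ) ≠ 0 := by positivity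
  have f5 : ((m + i : ℕ) : ℝ) + 1 ≠ 0 := by positivity
  have f6 : ((m + 1 + j : ℕ) : ℝ) + 1 ≠ 0 := by positivity
  push_cast
  rw [hkr]
  field_simp
  ring

lemma key_sum (m k : ℕ) :
    ∑ i ∈ Finset.range (k + 1),
        ((i.factorial * (m + i).factorial * (k - i).factorial *
          (m + 2 + (k - i)).factorial : ℕ) : ℝ)⁻¹
      ≤ ∑ i ∈ Finset.range (k + 1),
        ((i.factorial * (m + 1 + i).factorial * (k - i).factorial *
          (m + 1 + (k - i)).factorial : ℕ) : ℝ)⁻¹ := by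
  rw [← sub_nonneg, ← Finset.sum_sub_distrib]
  rw [Finset.sum_congr rfl fun i hi =>
    term_eq m k i (by simpa using Nat.lt_succ_iff.mp (Finset.mem_range.mp hi))]
  set D : ℕ → ℝ := fun i => ((k : ℝ) + 1 - 2 * i) * ((dd m k i : ℝ))⁻¹ with hD
  rw [Finset.sum_range_succ']
  have h0 : 0 ≤ D 0 := by
    rw [hD]; simp only [Nat.cast_zero, mul_zero, sub_zero]
    positivity
  have h2 : ∑ i ∈ Finset.range k, D (i + 1) = ∑ i ∈ Finset.range k, D (k - i) := by
    rw [← Finset.sum_range_reflect]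
    refine Finset.sum_congr rfl fun i hi => ?_
    have : k - 1 - i + 1 = k - i := by
      have := Finset.mem_range.mp hi; omega
    rw [this]
  have h3 : 0 ≤ ∑ i ∈ Finset.range k, (D (i + 1) + D (k - i)) := by
    refine Finset.sum_nonneg fun i hi => ?_
    have hik := Finset.mem_range.mp hi
    exact pair_nonneg m k (i + 1) (k - i) (by omega) (by omega) (by omega)
  rw [Finset.sum_add_distrib, ← h2] at h3
  simp only [hD] at h0 h3
  linarith

lemma bTerm_mul (p q : ℕ) (r : ℝ) (i j : ℕ) :
    bTerm p r i * bTerm q r j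
      = (r / 2) ^ (p + q + 2 * (i + j)) *
        ((i.factorial * (p + i).factorial * j.factorial * (q + j).factorial : ℕ) : ℝ)⁻¹ := by
  unfold bTerm
  rw [show p + q + 2 * (i + j) = (p + 2 * i) + (q + 2 * j) from by ring, pow_add]
  have f1 : (i.factorial : ℝ) ≠ 0 := by positivity
  have f2 : (j.factorial : ℝ) ≠ 0 := by positivity
  have f3 : ((p + i).factorial : ℝ) ≠ 0 := by positivity
  have f4 : ((q + j).factorial : ℝ) ≠ 0 := by positivity
  push_cast
  field_simp
  ring

lemma prod_summable (p q : ℕ) (r : ℝ) :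
    Summable fun k => ∑ kl ∈ Finset.HasAntidiagonal.antidiagonal k, bTerm p r kl.1 * bTerm q r kl.2 :=
  (summable_norm_sum_mul_antidiagonal_of_summable_norm
    (bTerm_norm_summable p r) (bTerm_norm_summable q r)).of_norm

lemma besselI_mul (p q : ℕ) (r : ℝ) :
    (∑' k, bTerm p r k) * (∑' k, bTerm q r k)
      = ∑' k, ∑ kl ∈ Finset.HasAntidiagonal.antidiagonal k, bTerm p r kl.1 * bTerm q r kl.2 :=
  tsum_mul_tsum_eq_tsum_sum_antidiagonal_of_summable_norm
    (bTerm_norm_summable p r) (bTerm_norm_summable q r)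

lemma coeff_eq (p q k : ℕ) (r : ℝ) :
    ∑ kl ∈ Finset.HasAntidiagonal.antidiagonal k, bTerm p r kl.1 * bTerm q r kl.2
      = (r / 2) ^ (p + q + 2 * k) *
        ∑ i ∈ Finset.range (k + 1),
          ((i.factorial * (p + i).factorial * (k - i).factorial *
            (q + (k - i)).factorial : ℕ) : ℝ)⁻¹ := by
  rw [Finset.Nat.sum_antidiagonal_eq_sum_range_succ_mk, Finset.mul_sum]
  refine Finset.sum_congr rfl fun i hi => ?_
  have hik : i ≤ k := Nat.lt_succ_iff.mp (Finset.mem_range.mp hi)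
  rw [bTerm_mul, Nat.add_sub_cancel' hik]

lemma besselI_eq (m : ℕ) (r : ℝ) : besselI m r = ∑' k, bTerm m r k :=
  besselI_eq' m r

theorem besselI_turan (n : ℕ) (hn : 1 ≤ n) (r : ℝ) (hr : 0 < r) :
    besselI (n - 1) r * besselI (n + 1) r < (besselI n r) ^ 2 := by
  obtain ⟨m, rfl⟩ : ∃ m, n = m + 1 := ⟨n - 1, by omega⟩
  show besselI m r * besselI (m + 2) r < (besselI (m + 1) r) ^ 2
  have hr2 : (0 : ℝ) < r / 2 := by linarith
  rw [sq, besselI_eq, besselI_eq, besselI_eq, besselI_mul m (m + 2) r,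
    besselI_mul (m + 1) (m + 1) r]
  refine Summable.tsum_lt_tsum (i := 0) (fun k => ?_) ?_ (prod_summable m (m + 2) r)
    (prod_summable (m + 1) (m + 1) r)
  · rw [coeff_eq, coeff_eq, show m + (m + 2) + 2 * k = (m + 1) + (m + 1) + 2 * k from by omega]
    exact mul_le_mul_of_nonneg_left (key_sum m k) (by positivity)
  · rw [coeff_eq, coeff_eq, show m + (m + 2) + 2 * 0 = (m + 1) + (m + 1) + 2 * 0 from by omega,
      Finset.sum_range_one, Finset.sum_range_one]
    simp only [Nat.sub_zero, Nat.factorial_zero, Nat.add_zero, one_mul, mul_one]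
    apply mul_lt_mul_of_pos_left _ (pow_pos hr2 _)
    have hnat : (m + 1).factorial * (m + 1).factorial < m.factorial * (m + 2).factorial := by
      have e1 : (m + 2).factorial = (m + 2) * (m + 1).factorial := Nat.factorial_succ (m + 1)
      have e2 : (m + 1).factorial = (m + 1) * m.factorial := Nat.factorial_succ m
      calc (m + 1).factorial * (m + 1).factorial
          = (m + 1) * (m.factorial * (m + 1).factorial) := by rw [e2]; ring
        _ < (m + 2) * (m.factorial * (m + 1).factorial) := by
            have hp : 0 < m.factorial * (m + 1).factorial :=
              Nat.mul_pos m.factorial_pos (m + 1).factorial_pos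
            exact Nat.mul_lt_mul_of_lt_of_le (by omega) le_rfl hp
        _ = m.factorial * (m + 2).factorial := by rw [e1]; ring
    apply inv_strictAnti₀
    · exact_mod_cast Nat.mul_pos (m + 1).factorial_pos (m + 1).factorial_pos
    · exact_mod_cast hnat
end

section
/- For every nonnegative integer n and every r > 0, P_n(r) > P_{n+1}(r). -/
open Real Filter Set

namespace BesselAux

/-- The `k`-th term of the series of `besselI a (2*x)`. -/
noncomputable def f (a : ℕ) (x : ℝ) (k : ℕ) : ℝ :=
  (1 / (k.factorial * (a + k).factorial)) * x ^ (a + 2 * k)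

lemma besselI_eq (a : ℕ) (r : ℝ) : besselI a r = ∑' k, f a (r / 2) k := by
  unfold besselI f
  congr 1; funext k
  have h : (a : ℝ) + k + 1 = ((a + k : ℕ) : ℝ) + 1 := by push_cast; ring
  rw [h, Real.Gamma_nat_eq_factorial]

lemma f_pos (a : ℕ) {x : ℝ} (hx : 0 < x) (k : ℕ) : 0 < f a x k := by
  unfold f; positivity

lemma f_nonneg (a : ℕ) {x : ℝ} (hx : 0 ≤ x) (k : ℕ) : 0 ≤ f a x k := by
  unfold f; positivity

lemma summable_f (a : ℕ) {x : ℝ} (hx : 0 ≤ x) : Summable (f a x) := by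
  have hg : Summable (fun k : ℕ => x ^ a * ((x ^ 2) ^ k / k.factorial)) :=
    (Real.summable_pow_div_factorial (x ^ 2)).mul_left _
  have hle : ∀ k : ℕ, f a x k ≤ x ^ a * ((x ^ 2) ^ k / k.factorial) := by
    intro k
    have h1 : (1 : ℝ) / (k.factorial * (a + k).factorial) ≤ 1 / k.factorial := by
      apply one_div_le_one_div_of_le
      · positivity
      · exact le_mul_of_one_le_right (by positivity)
          (by exact_mod_cast Nat.one_le_iff_ne_zero.mpr (a + k).factorial_ne_zero)
    calc f a x k ≤ (1 / k.factorial) * x ^ (a + 2 * k) := by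
          unfold f
          exact mul_le_mul_of_nonneg_right h1 (by positivity)
      _ = x ^ a * ((x ^ 2) ^ k / k.factorial) := by
          rw [pow_add, pow_mul]; ring
  exact Summable.of_nonneg_of_le (f_nonneg a hx) hle hg

lemma summable_norm_f (a : ℕ) {x : ℝ} (hx : 0 ≤ x) :
    Summable fun k => ‖f a x k‖ :=
  (summable_f a hx).congr fun k => (Real.norm_of_nonneg (f_nonneg a hx k)).symm

lemma mul_f_eq (a b : ℕ) {x : ℝ} (hx : 0 ≤ x) :
    (∑' k, f a x k) * (∑' k, f b x k)
      = ∑' m, ∑ kl ∈ Finset.HasAntidiagonal.antidiagonal m, f a x kl.1 * f b x kl.2 :=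
  tsum_mul_tsum_eq_tsum_sum_antidiagonal_of_summable_norm
    (summable_norm_f a hx) (summable_norm_f b hx)

lemma summable_cauchy (a b : ℕ) {x : ℝ} (hx : 0 ≤ x) :
    Summable fun m => ∑ kl ∈ Finset.HasAntidiagonal.antidiagonal m, f a x kl.1 * f b x kl.2 :=
  summable_sum_mul_antidiagonal_of_summable_mul
    (Summable.mul_of_nonneg (summable_f a hx) (summable_f b hx)
      (f_nonneg a hx) (f_nonneg b hx))

open Finset in
lemma nat_sum (c d m : ℕ) :
    ∑ k ∈ range (m + 1), m.choose k * (d + m).choose (c + (m - k))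
      = (d + 2 * m).choose (c + m) := by
  have h := Nat.add_choose_eq m (d + m) (c + m)
  rw [Finset.Nat.sum_antidiagonal_eq_sum_range_succ_mk] at h
  have hmd : m + (d + m) = d + 2 * m := by ring
  rw [hmd] at h
  rw [h]
  have hsub : range (m + 1) ⊆ range (c + m + 1) := Finset.range_subset_range.mpr (by omega)
  calc ∑ k ∈ range (m + 1), m.choose k * (d + m).choose (c + (m - k))
      = ∑ k ∈ range (m + 1), m.choose k * (d + m).choose (c + m - k) := by
        apply Finset.sum_congr rfl
        intro k hk
        have hk' : k ≤ m := by simpa [Nat.lt_succ_iff] using hk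
        have he : c + (m - k) = c + m - k := by omega
        rw [he]
    _ = ∑ k ∈ range (c + m + 1), m.choose k * (d + m).choose (c + m - k) := by
        apply Finset.sum_subset hsub
        intro i _ hi
        have him : m < i := by
          by_contra hc
          exact hi (Finset.mem_range.mpr (by omega))
        simp [Nat.choose_eq_zero_of_lt him]

lemma coeff_eq (a b m : ℕ) (x : ℝ) :
    ∑ kl ∈ Finset.HasAntidiagonal.antidiagonal m, f a x kl.1 * f b x kl.2
      = ((a + b + 2 * m).choose (b + m) : ℝ)
          / (m.factorial * (a + b + m).factorial) * x ^ (a + b + 2 * m) := by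
  rw [Finset.Nat.sum_antidiagonal_eq_sum_range_succ_mk]
  have key : ∀ k ∈ Finset.range (m + 1),
      f a x k * f b x (m - k)
        = ((m.choose k * (a + b + m).choose (b + (m - k)) : ℕ) : ℝ)
            / (m.factorial * (a + b + m).factorial) * x ^ (a + b + 2 * m) := by
    intro k hk
    have hk' : k ≤ m := by simpa [Nat.lt_succ_iff] using hk
    have h1 : ((m.choose k : ℕ) : ℝ) = m.factorial / (k.factorial * (m - k).factorial) :=
      Nat.cast_choose ℝ hk'
    have h2 : (((a + b + m).choose (b + (m - k)) : ℕ) : ℝ)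
        = (a + b + m).factorial / ((b + (m - k)).factorial * (a + k).factorial) := by
      have hle : b + (m - k) ≤ a + b + m := by omega
      have hsub : a + b + m - (b + (m - k)) = a + k := by omega
      rw [Nat.cast_choose ℝ hle, hsub]
    have hxp : x ^ (a + 2 * k) * x ^ (b + 2 * (m - k)) = x ^ (a + b + 2 * m) := by
      rw [← pow_add]; congr 1; omega
    have e1 : (k.factorial : ℝ) ≠ 0 := Nat.cast_ne_zero.mpr k.factorial_ne_zero
    have e2 : ((m - k).factorial : ℝ) ≠ 0 := Nat.cast_ne_zero.mpr (m - k).factorial_ne_zero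
    have e3 : ((a + k).factorial : ℝ) ≠ 0 := Nat.cast_ne_zero.mpr (a + k).factorial_ne_zero
    have e4 : ((b + (m - k)).factorial : ℝ) ≠ 0 :=
      Nat.cast_ne_zero.mpr (b + (m - k)).factorial_ne_zero
    have e5 : (m.factorial : ℝ) ≠ 0 := Nat.cast_ne_zero.mpr m.factorial_ne_zero
    have e6 : ((a + b + m).factorial : ℝ) ≠ 0 :=
      Nat.cast_ne_zero.mpr (a + b + m).factorial_ne_zero
    unfold f
    rw [mul_mul_mul_comm, hxp, Nat.cast_mul, h1, h2]
    field_simp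
  rw [Finset.sum_congr rfl key, ← Finset.sum_mul, ← Finset.sum_div, ← Nat.cast_sum,
    nat_sum b (a + b) m]

lemma choose_lt (c : ℕ) (hc : 1 ≤ c) : (2 * c).choose (c + 1) < (2 * c).choose c := by
  have h := Nat.choose_succ_right_eq (2 * c) c
  have hsub : 2 * c - c = c := by omega
  rw [hsub] at h
  have hpos : 0 < (2 * c).choose c := Nat.choose_pos (by omega)
  have hlt : (2 * c).choose (c + 1) * (c + 1) < (2 * c).choose c * (c + 1) := by
    rw [h]
    exact (mul_lt_mul_iff_right₀ hpos).mpr (by omega)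
  exact lt_of_mul_lt_mul_right hlt (by omega)

lemma turan (n : ℕ) {r : ℝ} (hr : 0 < r) :
    besselI n r * besselI (n + 2) r < besselI (n + 1) r * besselI (n + 1) r := by
  have hx : 0 < r / 2 := by positivity
  rw [besselI_eq n, besselI_eq (n + 1), besselI_eq (n + 2)]
  rw [mul_f_eq n (n + 2) hx.le, mul_f_eq (n + 1) (n + 1) hx.le]
  have hstrict : ∀ m : ℕ,
      (∑ kl ∈ Finset.HasAntidiagonal.antidiagonal m, f n (r / 2) kl.1 * f (n + 2) (r / 2) kl.2)
        < ∑ kl ∈ Finset.HasAntidiagonal.antidiagonal m, f (n + 1) (r / 2) kl.1 * f (n + 1) (r / 2) kl.2 := by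
    intro m
    rw [coeff_eq n (n + 2) m, coeff_eq (n + 1) (n + 1) m]
    have hd1 : n + 1 + (n + 1) + m = n + (n + 2) + m := by ring
    have hd2 : n + 1 + (n + 1) + 2 * m = n + (n + 2) + 2 * m := by ring
    rw [hd1, hd2]
    have hD : (0 : ℝ) < m.factorial * (n + (n + 2) + m).factorial := by positivity
    have hkey : (((n + (n + 2) + 2 * m).choose (n + 2 + m) : ℕ) : ℝ)
        < (((n + (n + 2) + 2 * m).choose (n + 1 + m) : ℕ) : ℝ) := by
      have e1 : n + (n + 2) + 2 * m = 2 * (n + 1 + m) := by ring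
      have e2 : n + 2 + m = (n + 1 + m) + 1 := by ring
      rw [e1, e2]
      exact_mod_cast choose_lt (n + 1 + m) (by omega)
    have hP : (0 : ℝ) < (r / 2) ^ (n + (n + 2) + 2 * m) := pow_pos hx _
    exact mul_lt_mul_of_pos_right ((div_lt_div_iff_of_pos_right hD).mpr hkey) hP
  exact Summable.tsum_lt_tsum (fun m => (hstrict m).le) (hstrict 0)
    (summable_cauchy n (n + 2) hx.le) (summable_cauchy (n + 1) (n + 1) hx.le)

lemma besselI_pos (a : ℕ) {r : ℝ} (hr : 0 < r) : 0 < besselI a r := by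
  have hx : 0 < r / 2 := by positivity
  rw [besselI_eq]
  exact Summable.tsum_pos (summable_f a hx.le) (fun k => (f_pos a hx k).le) 0 (f_pos a hx 0)

end BesselAux

theorem P_strict_anti_in_n (n : ℕ) (r : ℝ) (hr : 0 < r) :
    P n r > P (n + 1) r := by
  have h0 := BesselAux.besselI_pos n hr
  have h1 := BesselAux.besselI_pos (n + 1) hr
  have h2 := BesselAux.besselI_pos (n + 2) hr
  have ht := BesselAux.turan n hr
  unfold P
  have e : n + 1 + 1 = n + 2 := rfl
  rw [e, gt_iff_lt, div_lt_div_iff₀ (by positivity) (by positivity)]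
  nlinarith [mul_lt_mul_of_pos_left ht hr]
end

section
/- For every nonnegative integer n, the function P_n is strictly decreasing on (0, ∞), i.e., P_n'(r) < 0 for all r > 0. -/
open Real Filter Set

namespace BesselAux

/-- coefficient -/
noncomputable def c (m k : ℕ) : ℝ := 1 / (k.factorial * (m + k).factorial)

lemma c_pos (m k : ℕ) : 0 < c m k := by
  unfold c; positivity

/-- the entire function `g m x = ∑ x^k/(k! (m+k)!)` -/
noncomputable def g (m : ℕ) (x : ℝ) : ℝ := ∑' k : ℕ, c m k * x ^ k

lemma norm_c_mul_pow_le (m k : ℕ) (x : ℝ) : ‖c m k * x ^ k‖ ≤ |x| ^ k / k.factorial := by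
  rw [norm_mul, norm_pow, Real.norm_eq_abs, Real.norm_eq_abs, abs_of_pos (c_pos m k)]
  rw [div_eq_mul_one_div, mul_comm (|x| ^ k)]
  apply mul_le_mul_of_nonneg_right _ (by positivity)
  unfold c
  apply one_div_le_one_div_of_le
  · positivity
  · exact le_mul_of_one_le_right (by positivity) (by exact_mod_cast (m + k).factorial_pos)

lemma summable_norm_g (m : ℕ) (x : ℝ) : Summable fun k => ‖c m k * x ^ k‖ :=
  Summable.of_nonneg_of_le (fun _ => norm_nonneg _) (norm_c_mul_pow_le m · x)
    (Real.summable_pow_div_factorial |x|)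

lemma summable_g (m : ℕ) (x : ℝ) : Summable fun k => c m k * x ^ k :=
  (summable_norm_g m x).of_norm

lemma norm_deriv_term_le (m k : ℕ) {R y : ℝ} (hR : 1 ≤ R) (hy : |y| ≤ R) :
    ‖c m k * ((k : ℝ) * y ^ (k - 1))‖ ≤ (2 * R) ^ k / k.factorial := by
  have h1 : ‖c m k * ((k : ℝ) * y ^ (k - 1))‖
      = c m k * ((k : ℝ) * |y| ^ (k - 1)) := by
    rw [norm_mul, norm_mul, norm_pow, Real.norm_eq_abs, Real.norm_eq_abs, Real.norm_eq_abs,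
      abs_of_pos (c_pos m k), Nat.abs_cast]
  rw [h1, mul_pow, div_eq_mul_one_div, mul_comm ((2:ℝ) ^ k * R ^ k), mul_comm ((2:ℝ)^k)]
  have hck : c m k ≤ 1 / k.factorial := by
    unfold c
    apply one_div_le_one_div_of_le
    · positivity
    · exact le_mul_of_one_le_right (by positivity) (by exact_mod_cast (m + k).factorial_pos)
  have hk2 : (k : ℝ) ≤ 2 ^ k := by
    exact_mod_cast (Nat.lt_two_pow_self (n := k)).le
  have hyR : |y| ^ (k - 1) ≤ R ^ k := by
    calc |y| ^ (k - 1) ≤ R ^ (k - 1) := by gcongr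
    _ ≤ R ^ k := pow_le_pow_right₀ hR (Nat.sub_le k 1)
  calc c m k * ((k : ℝ) * |y| ^ (k - 1)) ≤ (1 / k.factorial) * ((2:ℝ) ^ k * R ^ k) := by
        apply mul_le_mul hck _ (by positivity) (by positivity)
        exact mul_le_mul hk2 hyR (by positivity) (by positivity)
  _ = 1 / ↑k.factorial * (R ^ k * 2 ^ k) := by ring

lemma summable_norm_d (m : ℕ) (x : ℝ) :
    Summable fun k => ‖c m k * ((k : ℝ) * x ^ (k - 1))‖ := by
  apply Summable.of_nonneg_of_le (fun _ => norm_nonneg _)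
    (fun k => norm_deriv_term_le m k (R := |x| + 1) (by linarith [abs_nonneg x]) (by linarith))
  exact Real.summable_pow_div_factorial _

lemma summable_d (m : ℕ) (x : ℝ) : Summable fun k => c m k * ((k : ℝ) * x ^ (k - 1)) :=
  (summable_norm_d m x).of_norm

lemma c_succ (m k : ℕ) : c m (k + 1) * ((k : ℝ) + 1) = c (m + 1) k := by
  unfold c
  rw [Nat.factorial_succ]
  have : m + (k + 1) = m + 1 + k := by omega
  rw [this]
  push_cast
  have h1 : (0:ℝ) < k.factorial := by exact_mod_cast k.factorial_pos
  have h2 : (0:ℝ) < (m + 1 + k).factorial := by exact_mod_cast (m + 1 + k).factorial_pos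
  field_simp

lemma tsum_d (m : ℕ) (x : ℝ) :
    ∑' k : ℕ, c m k * ((k : ℝ) * x ^ (k - 1)) = g (m + 1) x := by
  rw [Summable.tsum_eq_zero_add (summable_d m x)]
  simp only [Nat.cast_zero, zero_mul, mul_zero, zero_add]
  unfold g
  apply tsum_congr
  intro k
  have : (k : ℕ) + 1 - 1 = k := rfl
  rw [this]
  push_cast
  rw [← c_succ m k]
  ring

lemma hasDerivAt_g (m : ℕ) (x : ℝ) : HasDerivAt (g m) (g (m + 1) x) x := by
  rw [← tsum_d m x]
  set R := |x| + 1 with hR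
  have hR1 : (1:ℝ) ≤ R := by rw [hR]; linarith [abs_nonneg x]
  apply hasDerivAt_tsum_of_isPreconnected
    (Real.summable_pow_div_factorial (2 * R)) (Metric.isOpen_ball (x := (0:ℝ)) (ε := R))
    ((convex_ball (0:ℝ) R).isPreconnected)
    (g := fun k y => c m k * y ^ k)
    (g' := fun k y => c m k * ((k : ℝ) * y ^ (k - 1)))
    (y₀ := 0)
  · intro k y _
    exact (hasDerivAt_pow k y).const_mul (c m k)
  · intro k y hy
    apply norm_deriv_term_le m k hR1
    rw [Metric.mem_ball, Real.dist_eq, sub_zero] at hy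
    exact hy.le
  · rw [Metric.mem_ball, dist_self]; linarith
  · exact summable_g m 0
  · rw [Metric.mem_ball, Real.dist_eq, sub_zero]
    simp [hR]

lemma g_pos (m : ℕ) {x : ℝ} (hx : 0 ≤ x) : 0 < g m x := by
  have := Summable.tsum_pos (summable_g m x) (fun k => mul_nonneg (c_pos m k).le (pow_nonneg hx k)) 0 (by simpa using c_pos m 0)
  simpa [g] using this

lemma factorial_cross {m j k : ℕ} (h : j ≤ k) :
    (m + 1 + j).factorial * (m + k).factorial ≤ (m + 1 + k).factorial * (m + j).factorial := by
  have h1 : m + 1 + j = (m + j) + 1 := by omega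
  have h2 : m + 1 + k = (m + k) + 1 := by omega
  rw [h1, h2, Nat.factorial_succ, Nat.factorial_succ]
  calc (m + j + 1) * (m + j).factorial * (m + k).factorial
      ≤ (m + k + 1) * (m + j).factorial * (m + k).factorial := by
        apply Nat.mul_le_mul_right
        exact Nat.mul_le_mul_right _ (by omega)
  _ = (m + k + 1) * (m + k).factorial * (m + j).factorial := by ring

/-- key coefficient inequality: for `j ≤ k`, `c (m+1) k * c m j ≤ c (m+1) j * c m k`. -/
lemma c_cross {m j k : ℕ} (h : j ≤ k) : c (m + 1) k * c m j ≤ c (m + 1) j * c m k := by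
  unfold c
  rw [one_div_mul_one_div, one_div_mul_one_div]
  apply one_div_le_one_div_of_le
  · exact_mod_cast Nat.mul_pos (Nat.mul_pos j.factorial_pos (m + 1 + j).factorial_pos)
      (Nat.mul_pos k.factorial_pos (m + k).factorial_pos)
  · have key : j.factorial * (m + 1 + j).factorial * (k.factorial * (m + k).factorial)
        ≤ k.factorial * (m + 1 + k).factorial * (j.factorial * (m + j).factorial) := by
      calc j.factorial * (m + 1 + j).factorial * (k.factorial * (m + k).factorial)
          = (j.factorial * k.factorial) * ((m + 1 + j).factorial * (m + k).factorial) := by ring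
      _ ≤ (j.factorial * k.factorial) * ((m + 1 + k).factorial * (m + j).factorial) :=
          Nat.mul_le_mul_left _ (factorial_cross h)
      _ = k.factorial * (m + 1 + k).factorial * (j.factorial * (m + j).factorial) := by ring
    exact_mod_cast key

lemma c_cross_strict (m : ℕ) : c (m + 1) 1 * c m 0 < c (m + 1) 0 * c m 1 := by
  unfold c
  rw [one_div_mul_one_div, one_div_mul_one_div]
  apply one_div_lt_one_div_of_lt
  · exact_mod_cast Nat.mul_pos (Nat.mul_pos (Nat.factorial_pos 0) (m + 1 + 0).factorial_pos)
      (Nat.mul_pos (Nat.factorial_pos 1) (m + 1).factorial_pos)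
  · have key : Nat.factorial 0 * (m + 1 + 0).factorial * (Nat.factorial 1 * (m + 1).factorial)
        < Nat.factorial 1 * (m + 1 + 1).factorial * (Nat.factorial 0 * (m + 0).factorial) := by
      have fp := m.factorial_pos
      norm_num [Nat.factorial_succ, Nat.factorial_zero, Nat.factorial_one]
      calc (m + 1) * m.factorial * ((m + 1) * m.factorial)
          = ((m + 1) * (m + 1)) * (m.factorial * m.factorial) := by ring
      _ < ((m + 1 + 1) * (m + 1)) * (m.factorial * m.factorial) :=
          mul_lt_mul_of_pos_right (Nat.mul_lt_mul_of_lt_of_le (by omega) (le_refl _) (by omega)) (Nat.mul_pos fp fp)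
      _ = (m + 1 + 1) * ((m + 1) * m.factorial) * m.factorial := by ring
    exact_mod_cast key

/-- single paired term of the double sum -/
noncomputable def pairTerm (m : ℕ) (x : ℝ) (k j : ℕ) : ℝ :=
  (c (m + 1) k * ((k : ℝ) * x ^ (k - 1)) * (c m j * x ^ j)
    - c (m + 1) k * x ^ k * (c m j * ((j : ℝ) * x ^ (j - 1))))

lemma pair_nonpos_of_le (m : ℕ) {x : ℝ} (hx : 0 < x) {j k : ℕ} (h : j ≤ k) :
    pairTerm m x k j + pairTerm m x j k ≤ 0 := by
  have key := c_cross (m := m) h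
  unfold pairTerm
  rcases Nat.eq_zero_or_pos k with hk | hk
  · have hj : j = 0 := by omega
    subst hk; subst hj
    norm_num
  · obtain ⟨K, rfl⟩ : ∃ K, k = K + 1 := ⟨k - 1, by omega⟩
    rcases Nat.eq_zero_or_pos j with hj | hj
    · subst hj
      have expand :
          c (m + 1) (K + 1) * ((((K:ℕ) + 1 : ℕ) : ℝ) * x ^ (K + 1 - 1)) * (c m 0 * x ^ 0)
            - c (m + 1) (K + 1) * x ^ (K + 1) * (c m 0 * (((0:ℕ) : ℝ) * x ^ (0 - 1)))
            + (c (m + 1) 0 * (((0:ℕ) : ℝ) * x ^ (0 - 1)) * (c m (K + 1) * x ^ (K + 1))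
            - c (m + 1) 0 * x ^ 0 * (c m (K + 1) * ((((K:ℕ) + 1 : ℕ) : ℝ) * x ^ (K + 1 - 1))))
          = (((K : ℝ) + 1))
            * (c (m + 1) (K + 1) * c m 0 - c (m + 1) 0 * c m (K + 1)) * x ^ K := by
        simp only [Nat.add_sub_cancel]
        push_cast
        ring
      rw [expand]
      have hA : (0:ℝ) ≤ (K : ℝ) + 1 := by positivity
      have hB : c (m + 1) (K + 1) * c m 0 - c (m + 1) 0 * c m (K + 1) ≤ 0 :=
        sub_nonpos.mpr key
      have hX : (0:ℝ) ≤ x ^ K := pow_nonneg hx.le K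
      nlinarith [mul_nonneg hA hX]
    · obtain ⟨J, rfl⟩ : ∃ J, j = J + 1 := ⟨j - 1, by omega⟩
      have expand :
          c (m + 1) (K + 1) * ((((K:ℕ) + 1 : ℕ) : ℝ) * x ^ (K + 1 - 1)) * (c m (J + 1) * x ^ (J + 1))
            - c (m + 1) (K + 1) * x ^ (K + 1) * (c m (J + 1) * ((((J:ℕ) + 1 : ℕ) : ℝ) * x ^ (J + 1 - 1)))
            + (c (m + 1) (J + 1) * ((((J:ℕ) + 1 : ℕ) : ℝ) * x ^ (J + 1 - 1)) * (c m (K + 1) * x ^ (K + 1))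
            - c (m + 1) (J + 1) * x ^ (J + 1) * (c m (K + 1) * ((((K:ℕ) + 1 : ℕ) : ℝ) * x ^ (K + 1 - 1))))
          = (((K : ℝ)) - (J : ℝ))
            * (c (m + 1) (K + 1) * c m (J + 1) - c (m + 1) (J + 1) * c m (K + 1))
            * x ^ (K + J + 1) := by
        simp only [Nat.add_sub_cancel]
        push_cast
        rw [show K + J + 1 = K + (J + 1) from by omega, pow_add,
          show x ^ (K + 1) = x ^ K * x from pow_succ x K]
        ring
      rw [expand]
      have hA : (0:ℝ) ≤ (K : ℝ) - (J : ℝ) := by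
        have : (J:ℝ) ≤ (K:ℝ) := by exact_mod_cast (by omega : J ≤ K)
        linarith
      have hB : c (m + 1) (K + 1) * c m (J + 1) - c (m + 1) (J + 1) * c m (K + 1) ≤ 0 :=
        sub_nonpos.mpr key
      have hX : (0:ℝ) ≤ x ^ (K + J + 1) := pow_nonneg hx.le _
      nlinarith [mul_nonneg hA hX]

lemma pair_nonpos (m : ℕ) {x : ℝ} (hx : 0 < x) (k j : ℕ) :
    pairTerm m x k j + pairTerm m x j k ≤ 0 := by
  rcases le_total j k with h | h
  · exact pair_nonpos_of_le m hx h
  · rw [add_comm]; exact pair_nonpos_of_le m hx h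

lemma pair_neg (m : ℕ) {x : ℝ} (hx : 0 < x) :
    pairTerm m x 1 0 + pairTerm m x 0 1 < 0 := by
  have key := c_cross_strict m
  unfold pairTerm
  norm_num
  nlinarith [key]

lemma turan_s10 (m : ℕ) {x : ℝ} (hx : 0 < x) :
    g (m + 2) x * g m x - g (m + 1) x * g (m + 1) x < 0 := by
  -- H p is the general term of the double series for the numerator
  set H : ℕ × ℕ → ℝ := fun p => pairTerm m x p.1 p.2 with hHdef
  have hH1 : Summable fun p : ℕ × ℕ =>
      (c (m + 1) p.1 * ((p.1 : ℝ) * x ^ (p.1 - 1))) * (c m p.2 * x ^ p.2) :=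
    summable_mul_of_summable_norm (R := ℝ)
      (f := fun k => c (m + 1) k * ((k : ℝ) * x ^ (k - 1))) (g := fun j => c m j * x ^ j)
      (summable_norm_d (m + 1) x) (summable_norm_g m x)
  have hH2 : Summable fun p : ℕ × ℕ =>
      (c (m + 1) p.1 * x ^ p.1) * (c m p.2 * ((p.2 : ℝ) * x ^ (p.2 - 1))) :=
    summable_mul_of_summable_norm (R := ℝ)
      (f := fun k => c (m + 1) k * x ^ k) (g := fun j => c m j * ((j : ℝ) * x ^ (j - 1)))
      (summable_norm_g (m + 1) x) (summable_norm_d m x)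
  have hH : Summable H := by
    have := hH1.sub hH2
    exact this
  have e2 : g (m + 2) x * g m x = ∑' p : ℕ × ℕ,
      (c (m + 1) p.1 * ((p.1 : ℝ) * x ^ (p.1 - 1))) * (c m p.2 * x ^ p.2) := by
    rw [← tsum_d (m + 1) x]
    exact tsum_mul_tsum_of_summable_norm (summable_norm_d (m + 1) x) (summable_norm_g m x)
  have e3 : g (m + 1) x * g (m + 1) x = ∑' p : ℕ × ℕ,
      (c (m + 1) p.1 * x ^ p.1) * (c m p.2 * ((p.2 : ℝ) * x ^ (p.2 - 1))) := by
    nth_rewrite 2 [← tsum_d m x]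
    exact tsum_mul_tsum_of_summable_norm (summable_norm_g (m + 1) x) (summable_norm_d m x)
  have eN : g (m + 2) x * g m x - g (m + 1) x * g (m + 1) x = ∑' p, H p := by
    rw [e2, e3, ← Summable.tsum_sub hH1 hH2]
    apply tsum_congr
    intro p
    simp [hHdef, pairTerm]
  rw [eN]
  -- swap trick
  have hHswap : Summable fun p : ℕ × ℕ => H p.swap := by
    exact ((Equiv.prodComm ℕ ℕ).summable_iff).2 hH
  have hswap_eq : ∑' p : ℕ × ℕ, H p.swap = ∑' p, H p :=
    (Equiv.prodComm ℕ ℕ).tsum_eq H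
  have hT : Summable fun p : ℕ × ℕ => H p + H p.swap := hH.add hHswap
  have hTneg : ∑' p : ℕ × ℕ, (H p + H p.swap) < 0 := by
    have := Summable.tsum_lt_tsum (f := fun p : ℕ × ℕ => H p + H p.swap)
      (g := fun _ : ℕ × ℕ => (0 : ℝ)) (i := ((1 : ℕ), (0 : ℕ)))
      (fun p => pair_nonpos m hx p.1 p.2)
      (pair_neg m hx) hT summable_zero
    simpa using this
  have htwo : ∑' p : ℕ × ℕ, (H p + H p.swap) = 2 * ∑' p, H p := by
    rw [Summable.tsum_add hH hHswap, hswap_eq]; ring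
  linarith [htwo ▸ hTneg]

end BesselAux

namespace BesselAux

lemma besselI_eq_s10 (m : ℕ) (r : ℝ) : besselI m r = (r / 2) ^ m * g m (r ^ 2 / 4) := by
  unfold besselI g
  rw [← tsum_mul_left]
  apply tsum_congr
  intro k
  have hg : Real.Gamma ((m : ℝ) + (k : ℝ) + 1) = ((m + k).factorial : ℝ) := by
    rw [show ((m : ℝ) + (k : ℝ) + 1) = ((m + k : ℕ) : ℝ) + 1 by push_cast; ring,
      Real.Gamma_nat_eq_factorial]
  rw [hg]
  unfold c
  rw [pow_add, pow_mul]
  rw [show ((r / 2) ^ 2 : ℝ) = r ^ 2 / 4 by ring]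
  ring

lemma P_eq (n : ℕ) {r : ℝ} (hr : 0 < r) :
    P n r = g (n + 1) (r ^ 2 / 4) / (2 * g n (r ^ 2 / 4)) := by
  have hx : (0:ℝ) ≤ r ^ 2 / 4 := by positivity
  have hgn : g n (r ^ 2 / 4) ≠ 0 := (g_pos n hx).ne'
  have hr0 : r ≠ 0 := hr.ne'
  have h2 : ((r / 2 : ℝ)) ^ n ≠ 0 := pow_ne_zero _ (by positivity)
  unfold P
  rw [besselI_eq_s10, besselI_eq_s10, pow_succ]
  field_simp

end BesselAux

open BesselAux in
theorem P_strictAnti (n : ℕ) :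
    StrictAntiOn (P n) (Set.Ioi 0) ∧ ∀ r : ℝ, 0 < r → deriv (P n) r < 0 := by
  have main : ∀ r : ℝ, 0 < r → ∃ d : ℝ, d < 0 ∧ HasDerivAt (P n) d r := by
    intro r hr
    set x := r ^ 2 / 4 with hxdef
    have hx : 0 < x := by rw [hxdef]; positivity
    have hgn : 0 < g n x := g_pos n hx.le
    have hA := hasDerivAt_g (n + 1) x
    have hB := hasDerivAt_g n x
    have hq : HasDerivAt (fun y => g (n + 1) y / (2 * g n y))
        ((g (n + 1 + 1) x * (2 * g n x) - g (n + 1) x * (2 * g (n + 1) x)) / (2 * g n x) ^ 2)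
        x := hA.div (hB.const_mul 2) (by positivity)
    have hinner : HasDerivAt (fun s : ℝ => s ^ 2 / 4) (r / 2) r := by
      have := (hasDerivAt_pow 2 r).div_const 4
      exact this.congr_deriv (by push_cast; ring)
    have hcomp := hq.comp r hinner
    refine ⟨(g (n + 1 + 1) x * (2 * g n x) - g (n + 1) x * (2 * g (n + 1) x)) / (2 * g n x) ^ 2 * (r / 2), ?_, ?_⟩
    · apply mul_neg_of_neg_of_pos
      · apply div_neg_of_neg_of_pos
        · nlinarith [turan_s10 n hx]
        · positivity
      · linarith
    · apply hcomp.congr_of_eventuallyEq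
      filter_upwards [isOpen_Ioi.mem_nhds hr] with y hy
      exact P_eq n hy
  constructor
  · apply strictAntiOn_of_deriv_neg (convex_Ioi 0)
    · intro r hr
      obtain ⟨d, _, hD⟩ := main r hr
      exact hD.continuousAt.continuousWithinAt
    · intro r hr
      rw [interior_Ioi] at hr
      obtain ⟨d, hd, hD⟩ := main r hr
      rw [hD.deriv]; exact hd
  · intro r hr
    obtain ⟨d, hd, hD⟩ := main r hr
    rw [hD.deriv]; exact hd
end

section
/- The function r ↦ r · P_0(r) is strictly increasing on (0, ∞). -/
open Real Filter Set

namespace RP0aux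

open Finset

/-- coefficient of `r^(2j+1)` in `I₁`. -/
noncomputable def A (j : ℕ) : ℝ := 1 / (j.factorial * (j+1).factorial * 2^(2*j+1))
/-- coefficient of `r^(2k)` in `I₀`. -/
noncomputable def B (k : ℕ) : ℝ := 1 / ((k.factorial)^2 * 2^(2*k))

lemma A_pos (j : ℕ) : 0 < A j := by
  have h1 : (0:ℝ) < j.factorial := by exact_mod_cast j.factorial_pos
  have h2 : (0:ℝ) < (j+1).factorial := by exact_mod_cast (j+1).factorial_pos
  unfold A; positivity

lemma B_pos (k : ℕ) : 0 < B k := by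
  have h1 : (0:ℝ) < k.factorial := by exact_mod_cast k.factorial_pos
  unfold B; positivity

lemma A_le (k : ℕ) : A k ≤ 1 / k.factorial := by
  unfold A
  apply one_div_le_one_div_of_le
  · exact_mod_cast k.factorial_pos
  · have h2 : (1:ℝ) ≤ (k+1).factorial := by exact_mod_cast (k+1).factorial_pos
    have h3 : (1:ℝ) ≤ 2^(2*k+1) := one_le_pow₀ (by norm_num)
    have h1 : (0:ℝ) < k.factorial := by exact_mod_cast k.factorial_pos
    nlinarith [mul_le_mul h2 h3 (by norm_num : (0:ℝ) ≤ 1) (by linarith : (0:ℝ) ≤ (k+1).factorial)]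

lemma B_le (k : ℕ) : B k ≤ 1 / k.factorial := by
  unfold B
  apply one_div_le_one_div_of_le
  · exact_mod_cast k.factorial_pos
  · have h2 : (1:ℝ) ≤ k.factorial := by exact_mod_cast k.factorial_pos
    have h3 : (1:ℝ) ≤ 2^(2*k) := one_le_pow₀ (by norm_num)
    have h1 : (0:ℝ) < k.factorial := by exact_mod_cast k.factorial_pos
    nlinarith [mul_le_mul h2 h3 (by norm_num : (0:ℝ) ≤ 1) (by linarith : (0:ℝ) ≤ (k:ℕ).factorial)]

/-- comparison sequence -/
noncomputable def t (N : ℝ) (k : ℕ) : ℝ := (2*(k:ℝ)+2) * N^(2*k+1) / k.factorial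

lemma summable_t (N : ℝ) (hN : 1 ≤ N) : Summable (t N) := by
  have h0 : Summable (fun k : ℕ => (2*N) * (2*(N^2))^k / k.factorial) := by
    simpa [mul_div_assoc] using (Real.summable_pow_div_factorial (2*(N^2))).mul_left (2*N)
  apply h0.of_nonneg_of_le
  · intro k
    have h1 : (0:ℝ) < k.factorial := by exact_mod_cast k.factorial_pos
    have hN0 : (0:ℝ) < N := by linarith
    unfold t; positivity
  · intro k
    have h1 : (0:ℝ) < k.factorial := by exact_mod_cast k.factorial_pos
    unfold t
    rw [div_le_div_iff₀ h1 h1]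
    have hN0 : (0:ℝ) ≤ N := by linarith
    have e1 : N^(2*k+1) = N * (N^2)^k := by
      rw [← pow_mul]; ring
    have e2 : (2*(N^2))^k = 2^k * (N^2)^k := by rw [mul_pow]
    have h2 : (2*(k:ℝ)+2) ≤ 2*2^k := by
      have : (k:ℝ)+1 ≤ 2^k := by exact_mod_cast (Nat.lt_two_pow_self (n := k))
      nlinarith
    have h3 : (0:ℝ) ≤ (N^2)^k := by positivity
    calc (2*(k:ℝ)+2) * N^(2*k+1) * k.factorial
        = ((2*(k:ℝ)+2)) * (N * (N^2)^k) * k.factorial := by rw [e1]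
      _ ≤ (2*2^k) * (N * (N^2)^k) * k.factorial := by
          apply mul_le_mul_of_nonneg_right _ (le_of_lt h1)
          apply mul_le_mul_of_nonneg_right h2
          positivity
      _ = 2*N * (2*(N^2))^k * k.factorial := by rw [e2]; ring

noncomputable def I0 (r : ℝ) : ℝ := ∑' k : ℕ, B k * r^(2*k)
noncomputable def I1 (r : ℝ) : ℝ := ∑' k : ℕ, A k * r^(2*k+1)
noncomputable def I1d (r : ℝ) : ℝ := ∑' k : ℕ, A k * ((2*(k:ℝ)+1) * r^(2*k))

lemma besselI_zero (r : ℝ) : besselI 0 r = I0 r := by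
  unfold besselI I0
  apply tsum_congr
  intro k
  have hg : Real.Gamma ((0:ℕ) + (k:ℝ) + 1) = k.factorial := by
    rw [Nat.cast_zero, zero_add, Real.Gamma_nat_eq_factorial]
  rw [hg]
  unfold B
  rw [zero_add, div_pow]
  have h1 : (0:ℝ) < k.factorial := by exact_mod_cast k.factorial_pos
  ring

lemma besselI_one (r : ℝ) : besselI 1 r = I1 r := by
  unfold besselI I1
  apply tsum_congr
  intro k
  have hg : Real.Gamma ((1:ℕ) + (k:ℝ) + 1) = (k+1).factorial := by
    have : ((1:ℕ):ℝ) + (k:ℝ) + 1 = ((k+1 : ℕ) : ℝ) + 1 := by push_cast; ring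
    rw [this, Real.Gamma_nat_eq_factorial]
  rw [hg]
  unfold A
  rw [div_pow]
  have h1 : (0:ℝ) < k.factorial := by exact_mod_cast k.factorial_pos
  have h2 : (0:ℝ) < (k+1).factorial := by exact_mod_cast (k+1).factorial_pos
  have he : 1 + 2*k = 2*k+1 := by omega
  rw [he]
  have h2p : (2:ℝ)^(2*k+1) ≠ 0 := by positivity
  field_simp

lemma bound_helper {c x N : ℝ} {k e : ℕ} (hc : 0 ≤ c) (hcle : c ≤ (2*(k:ℝ)+2)/k.factorial)
    (hx : |x| ≤ N) (hN : 1 ≤ N) (he : e ≤ 2*k+1) : c * |x|^e ≤ t N k := by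
  have h1 : (0:ℝ) < k.factorial := by exact_mod_cast k.factorial_pos
  have hN0 : (0:ℝ) ≤ N := by linarith
  have hxe : |x|^e ≤ N^(2*k+1) := by
    calc |x|^e ≤ N^e := pow_le_pow_left₀ (abs_nonneg x) hx e
    _ ≤ N^(2*k+1) := pow_le_pow_right₀ hN he
  calc c * |x|^e ≤ ((2*(k:ℝ)+2)/k.factorial) * N^(2*k+1) :=
        mul_le_mul hcle hxe (by positivity) (by positivity)
    _ = t N k := by unfold t; ring

lemma cA (k : ℕ) : A k * (2*(k:ℝ)+1) ≤ (2*(k:ℝ)+2)/k.factorial := by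
  have h1 : (0:ℝ) < k.factorial := by exact_mod_cast k.factorial_pos
  have := A_le k
  have h2 : (0:ℝ) < A k := A_pos k
  rw [div_eq_mul_one_div]
  calc A k * (2*(k:ℝ)+1) ≤ (1/k.factorial) * (2*(k:ℝ)+1) := by
        apply mul_le_mul_of_nonneg_right this (by positivity)
    _ ≤ (1/k.factorial) * (2*(k:ℝ)+2) := by
        apply mul_le_mul_of_nonneg_left (by linarith) (by positivity)
    _ = (2*(k:ℝ)+2) * (1/k.factorial) := by ring

lemma cB (k : ℕ) : B k * (2*(k:ℝ)) ≤ (2*(k:ℝ)+2)/k.factorial := by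
  have h1 : (0:ℝ) < k.factorial := by exact_mod_cast k.factorial_pos
  have := B_le k
  rw [div_eq_mul_one_div]
  calc B k * (2*(k:ℝ)) ≤ (1/k.factorial) * (2*(k:ℝ)) := by
        apply mul_le_mul_of_nonneg_right this (by positivity)
    _ ≤ (1/k.factorial) * (2*(k:ℝ)+2) := by
        apply mul_le_mul_of_nonneg_left (by linarith) (by positivity)
    _ = (2*(k:ℝ)+2) * (1/k.factorial) := by ring

lemma cA' (k : ℕ) : A k ≤ (2*(k:ℝ)+2)/k.factorial := by
  have h := cA k
  have h2 : (0:ℝ) < A k := A_pos k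
  nlinarith

lemma cB' (k : ℕ) : B k ≤ (2*(k:ℝ)+2)/k.factorial := by
  have h := cB k
  have h2 : (0:ℝ) < B k := B_pos k
  have h1 : (0:ℝ) < k.factorial := by exact_mod_cast k.factorial_pos
  rcases Nat.eq_zero_or_pos k with hk | hk
  · subst hk; simp [B]
  · have : (1:ℝ) ≤ (k:ℝ) := by exact_mod_cast hk
    nlinarith

-- summability of the four sequences, in norm
lemma summable_norm_I0term (r : ℝ) : Summable (fun k : ℕ => ‖B k * r^(2*k)‖) := by
  set N := |r| + 1 with hNdef
  have hN : 1 ≤ N := by have := abs_nonneg r; simp [hNdef]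
  have hr : |r| ≤ N := by simp [hNdef]
  apply (summable_t N hN).of_nonneg_of_le (fun k => norm_nonneg _)
  intro k
  have : ‖B k * r^(2*k)‖ = B k * |r|^(2*k) := by
    rw [norm_mul, Real.norm_eq_abs, Real.norm_eq_abs, abs_pow,
      abs_of_pos (B_pos k)]
  rw [this]
  exact bound_helper (le_of_lt (B_pos k)) (cB' k) hr hN (by omega)

lemma summable_norm_I1term (r : ℝ) : Summable (fun k : ℕ => ‖A k * r^(2*k+1)‖) := by
  set N := |r| + 1 with hNdef
  have hN : 1 ≤ N := by have := abs_nonneg r; simp [hNdef]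
  have hr : |r| ≤ N := by simp [hNdef]
  apply (summable_t N hN).of_nonneg_of_le (fun k => norm_nonneg _)
  intro k
  have : ‖A k * r^(2*k+1)‖ = A k * |r|^(2*k+1) := by
    rw [norm_mul, Real.norm_eq_abs, Real.norm_eq_abs, abs_pow, abs_of_pos (A_pos k)]
  rw [this]
  exact bound_helper (le_of_lt (A_pos k)) (cA' k) hr hN (by omega)

lemma summable_norm_I1dterm (r : ℝ) : Summable (fun k : ℕ => ‖A k * ((2*(k:ℝ)+1) * r^(2*k))‖) := by
  set N := |r| + 1 with hNdef
  have hN : 1 ≤ N := by have := abs_nonneg r; simp [hNdef]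
  have hr : |r| ≤ N := by simp [hNdef]
  apply (summable_t N hN).of_nonneg_of_le (fun k => norm_nonneg _)
  intro k
  have : ‖A k * ((2*(k:ℝ)+1) * r^(2*k))‖ = (A k * (2*(k:ℝ)+1)) * |r|^(2*k) := by
    rw [norm_mul, norm_mul, Real.norm_eq_abs, Real.norm_eq_abs, Real.norm_eq_abs, abs_pow,
      abs_of_pos (A_pos k), abs_of_pos (by positivity : (0:ℝ) < 2*(k:ℝ)+1), mul_assoc]
  rw [this]
  exact bound_helper (mul_nonneg (A_pos k).le (by positivity)) (cA k) hr hN (by omega)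

lemma summable_norm_I0dterm {N : ℝ} (hN : 1 ≤ N) :
    Summable (fun k : ℕ => B k * (2*(k:ℝ)) * N^(2*k-1)) := by
  apply (summable_t N hN).of_nonneg_of_le
  · intro k
    have := B_pos k
    have hN0 : (0:ℝ) < N := by linarith
    positivity
  · intro k
    have hNp : (0:ℝ) < N := by linarith
    have h : B k * (2*(k:ℝ)) * N^(2*k-1) = (B k * (2*(k:ℝ))) * |N|^(2*k-1) := by
      rw [abs_of_pos hNp]
    have hxx : |N| ≤ N := le_of_eq (abs_of_pos hNp)
    rw [h]
    exact bound_helper (mul_nonneg (B_pos k).le (by positivity)) (cB k) hxx hN (by omega)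

lemma AB (k : ℕ) : B (k+1) * (2*((k:ℝ)+1)) = A k := by
  unfold A B
  rw [Nat.factorial_succ]
  push_cast
  have h1 : (0:ℝ) < k.factorial := by exact_mod_cast k.factorial_pos
  have h2 : (0:ℝ) < (k+1).factorial := by exact_mod_cast (k+1).factorial_pos
  rw [Nat.factorial_succ] at h2; push_cast at h2
  field_simp
  ring

lemma hasDerivAt_I0 (r : ℝ) : HasDerivAt I0 (I1 r) r := by
  set N := |r| + 1 with hNdef
  have hN : 1 ≤ N := by have := abs_nonneg r; simp [hNdef]
  have hNp : (0:ℝ) < N := by linarith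
  have hmem : r ∈ Ioo (-N) N := by
    constructor <;> [nlinarith [neg_abs_le r]; nlinarith [le_abs_self r]]
  have hder : HasDerivAt (fun z => ∑' k : ℕ, B k * z^(2*k))
      (∑' k : ℕ, B k * ((2*k : ℕ) * r^(2*k-1))) r := by
    apply hasDerivAt_tsum_of_isPreconnected (summable_norm_I0dterm hN)
      (isOpen_Ioo (a := -N) (b := N)) (convex_Ioo _ _).isPreconnected
      (g := fun k y => B k * y^(2*k)) (g' := fun k y => B k * ((2*k : ℕ) * y^(2*k-1)))
      (y₀ := r)
    · intro k y _
      exact (hasDerivAt_pow (2*k) y).const_mul (B k)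
    · intro k y hy
      have hyN : |y| ≤ N := by
        rw [abs_le]; constructor <;> [linarith [hy.1]; linarith [hy.2]]
      have : ‖B k * ((2*k : ℕ) * y^(2*k-1))‖ = B k * (2*(k:ℝ)) * |y|^(2*k-1) := by
        rw [norm_mul, norm_mul, Real.norm_eq_abs, Real.norm_eq_abs, Real.norm_eq_abs, abs_pow,
          abs_of_pos (B_pos k)]
        push_cast
        rw [abs_of_nonneg (by positivity : (0:ℝ) ≤ 2*(k:ℝ))]
        ring
      rw [this]
      have hpow : |y|^(2*k-1) ≤ N^(2*k-1) := pow_le_pow_left₀ (abs_nonneg y) hyN _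
      have hbk : (0:ℝ) ≤ B k * (2*(k:ℝ)) := mul_nonneg (B_pos k).le (by positivity)
      exact mul_le_mul_of_nonneg_left hpow hbk
    · exact hmem
    · exact (summable_norm_I0term r).of_norm
    · exact hmem
  have heq : (∑' k : ℕ, B k * ((2*k : ℕ) * r^(2*k-1))) = I1 r := by
    have hsum : Summable (fun k : ℕ => B k * ((2*k : ℕ) * r^(2*k-1))) := by
      apply (summable_norm_I0dterm hN).of_norm_bounded
      intro k
      have hyN : |r| ≤ N := by simp [hNdef]
      have : ‖B k * ((2*k : ℕ) * r^(2*k-1))‖ = B k * (2*(k:ℝ)) * |r|^(2*k-1) := by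
        rw [norm_mul, norm_mul, Real.norm_eq_abs, Real.norm_eq_abs, Real.norm_eq_abs, abs_pow,
          abs_of_pos (B_pos k)]
        push_cast
        rw [abs_of_nonneg (by positivity : (0:ℝ) ≤ 2*(k:ℝ))]
        ring
      rw [this]
      have hpow : |r|^(2*k-1) ≤ N^(2*k-1) := pow_le_pow_left₀ (abs_nonneg r) hyN _
      exact mul_le_mul_of_nonneg_left hpow (mul_nonneg (B_pos k).le (by positivity))
    rw [Summable.tsum_eq_zero_add hsum]
    simp only [Nat.mul_zero, Nat.cast_zero, zero_mul, mul_zero, zero_add]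
    unfold I1
    apply tsum_congr
    intro k
    have he : 2*(k+1)-1 = 2*k+1 := by omega
    rw [he]
    rw [← AB k]
    push_cast
    ring
  rw [heq] at hder
  exact hder

lemma hasDerivAt_I1 (r : ℝ) : HasDerivAt I1 (I1d r) r := by
  set N := |r| + 1 with hNdef
  have hN : 1 ≤ N := by have := abs_nonneg r; simp [hNdef]
  have hNp : (0:ℝ) < N := by linarith
  have hmem : r ∈ Ioo (-N) N := by
    constructor <;> [nlinarith [neg_abs_le r]; nlinarith [le_abs_self r]]
  have hder : HasDerivAt (fun z => ∑' k : ℕ, A k * z^(2*k+1))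
      (∑' k : ℕ, A k * ((2*k+1 : ℕ) * r^(2*k))) r := by
    apply hasDerivAt_tsum_of_isPreconnected
      (u := fun k => ‖A k * ((2*(k:ℝ)+1) * N^(2*k))‖)
      (summable_norm_I1dterm N)
      (isOpen_Ioo (a := -N) (b := N)) (convex_Ioo _ _).isPreconnected
      (g := fun k y => A k * y^(2*k+1)) (g' := fun k y => A k * ((2*k+1 : ℕ) * y^(2*k)))
      (y₀ := r)
    · intro k y _
      have := (hasDerivAt_pow (2*k+1) y).const_mul (A k)
      simpa using this
    · intro k y hy
      have hyN : |y| ≤ N := by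
        rw [abs_le]; constructor <;> [linarith [hy.1]; linarith [hy.2]]
      have h1 : ‖A k * ((2*k+1 : ℕ) * y^(2*k))‖ = A k * (2*(k:ℝ)+1) * |y|^(2*k) := by
        rw [norm_mul, norm_mul, Real.norm_eq_abs, Real.norm_eq_abs, Real.norm_eq_abs, abs_pow,
          abs_of_pos (A_pos k)]
        push_cast
        rw [abs_of_nonneg (by positivity : (0:ℝ) ≤ 2*(k:ℝ)+1)]
        ring
      have h2 : ‖A k * ((2*(k:ℝ)+1) * N^(2*k))‖ = A k * (2*(k:ℝ)+1) * N^(2*k) := by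
        rw [norm_mul, norm_mul, Real.norm_eq_abs, Real.norm_eq_abs, Real.norm_eq_abs, abs_pow,
          abs_of_pos (A_pos k), abs_of_nonneg (by positivity : (0:ℝ) ≤ 2*(k:ℝ)+1),
          abs_of_pos hNp]
        ring
      rw [h1, h2]
      have hpow : |y|^(2*k) ≤ N^(2*k) := pow_le_pow_left₀ (abs_nonneg y) hyN _
      exact mul_le_mul_of_nonneg_left hpow
        (mul_nonneg (A_pos k).le (by positivity))
    · exact hmem
    · exact (summable_norm_I1term r).of_norm
    · exact hmem
  have heq : (∑' k : ℕ, A k * ((2*k+1 : ℕ) * r^(2*k))) = I1d r := by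
    unfold I1d
    apply tsum_congr
    intro k
    push_cast
    ring
  rw [heq] at hder
  exact hder

/-- telescoping witness -/
noncomputable def g (m j : ℕ) : ℝ :=
  if j ≤ m then 4 * j / ((j.factorial:ℝ)^2 * ((m-j).factorial:ℝ)^2 * 2^(2*m+1)) else 0

lemma step (m j : ℕ) (hj : j ≤ m) :
    A j * B (m-j) * (((4*(j:ℝ)+1) - 2*m) * (2*(m:ℝ)+1) - 1) = g m j - g m (j+1) := by
  have hfj : (0:ℝ) < j.factorial := by exact_mod_cast j.factorial_pos
  have hfj1 : (0:ℝ) < (j+1).factorial := by exact_mod_cast (j+1).factorial_pos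
  rcases eq_or_lt_of_le hj with rfl | hjm
  · -- j = m
    have h1 : j - j = 0 := by omega
    have h2 : ¬ (j+1 ≤ j) := by omega
    unfold g
    rw [h1]
    simp only [le_refl, if_true, h2, if_false, Nat.factorial_zero]
    unfold A B
    rw [Nat.factorial_succ j]
    push_cast
    field_simp
    ring
  · -- j < m
    obtain ⟨d, hd⟩ : ∃ d, m = j + d + 1 := ⟨m - j - 1, by omega⟩
    subst hd
    have h1 : j + d + 1 - j = d + 1 := by omega
    have h2 : j + d + 1 - (j+1) = d := by omega
    have h3 : j ≤ j + d + 1 := by omega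
    have h4 : j + 1 ≤ j + d + 1 := by omega
    unfold g
    rw [h1, h2]
    simp only [h3, if_true, h4, if_true]
    unfold A B
    have hfd : (0:ℝ) < d.factorial := by exact_mod_cast d.factorial_pos
    have hfd1 : (0:ℝ) < (d+1).factorial := by exact_mod_cast (d+1).factorial_pos
    rw [Nat.factorial_succ j, Nat.factorial_succ d]
    push_cast
    field_simp
    ring

lemma telescope (m : ℕ) :
    ∑ j ∈ range (m+1), A j * B (m-j) * ((4*(j:ℝ)+1) - 2*m)
      = (∑ j ∈ range (m+1), A j * B (m-j)) / (2*(m:ℝ)+1) := by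
  have h2m : (2*(m:ℝ)+1) ≠ 0 := by positivity
  rw [eq_div_iff h2m, sum_mul]
  rw [← sub_eq_zero, ← sum_sub_distrib]
  have : ∀ j ∈ range (m+1),
      A j * B (m-j) * ((4*(j:ℝ)+1) - 2*m) * (2*(m:ℝ)+1) - A j * B (m-j)
        = g m j - g m (j+1) := by
    intro j hj
    rw [Finset.mem_range] at hj
    have := step m j (by omega)
    calc A j * B (m-j) * ((4*(j:ℝ)+1) - 2*m) * (2*(m:ℝ)+1) - A j * B (m-j)
        = A j * B (m-j) * (((4*(j:ℝ)+1) - 2*m) * (2*(m:ℝ)+1) - 1) := by ring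
      _ = g m j - g m (j+1) := this
  rw [sum_congr rfl this, sum_range_sub' (g m)]
  have hg0 : g m 0 = 0 := by unfold g; simp
  have hgm : g m (m+1) = 0 := by unfold g; simp
  rw [hg0, hgm, sub_zero]

lemma w_pos (m : ℕ) :
    0 < ∑ j ∈ range (m+1), A j * B (m-j) * ((4*(j:ℝ)+1) - 2*m) := by
  rw [telescope]
  apply div_pos _ (by positivity)
  apply sum_pos _ nonempty_range_add_one
  intro j _
  exact mul_pos (A_pos j) (B_pos _)

lemma I0_pos (r : ℝ) : 0 < I0 r := by
  unfold I0
  have hterm : ∀ k : ℕ, 0 ≤ B k * r^(2*k) := by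
    intro k
    rw [pow_mul]
    exact mul_nonneg (B_pos k).le (by positivity)
  refine Summable.tsum_pos ((summable_norm_I0term r).of_norm) hterm 0 ?_
  simpa using B_pos 0

noncomputable def Pc (n : ℕ) : ℝ := ∑ j ∈ range (n+1), A j * (2*(j:ℝ)+1) * B (n-j)
noncomputable def Qc (n : ℕ) : ℝ := ∑ j ∈ range (n+1), A j * A (n-j)

lemma PQ (n : ℕ) : Pc (n+1) - Qc n
    = ∑ j ∈ range (n+2), A j * B (n+1-j) * ((4*(j:ℝ)+1) - 2*(n+1)) := by
  have hQ : Qc n = ∑ j ∈ range (n+1), A j * B (n+1-j) * (2*((n:ℝ)+1) - 2*j) := by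
    unfold Qc
    apply sum_congr rfl
    intro j hj
    rw [Finset.mem_range] at hj
    have h1 : n + 1 - j = (n - j) + 1 := by omega
    rw [h1, ← AB (n-j)]
    have h2 : ((n - j : ℕ) : ℝ) = (n:ℝ) - j := by
      rw [Nat.cast_sub (by omega)]
    rw [h2]
    ring
  have hQ' : Qc n = ∑ j ∈ range (n+2), A j * B (n+1-j) * (2*((n:ℝ)+1) - 2*j) := by
    rw [hQ]
    have hz : A (n+1) * B (n+1-(n+1)) * (2*((n:ℝ)+1) - 2*((n+1:ℕ):ℝ)) = 0 := by
      push_cast; ring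
    conv_rhs => rw [sum_range_succ]
    rw [hz, add_zero]
  have hP : Pc (n+1) = ∑ j ∈ range (n+2), A j * B (n+1-j) * (2*(j:ℝ)+1) := by
    unfold Pc
    apply sum_congr rfl
    intro j _
    ring
  rw [hP, hQ', ← sum_sub_distrib]
  apply sum_congr rfl
  intro j _
  push_cast
  ring

lemma W_pos (r : ℝ) : 0 < I1d r * I0 r - I1 r * I1 r := by
  -- Cauchy products
  have hprod1 : I1d r * I0 r = ∑' n : ℕ,
      ∑ kl ∈ Finset.HasAntidiagonal.antidiagonal n,
        (A kl.1 * ((2*(kl.1:ℝ)+1) * r^(2*kl.1))) * (B kl.2 * r^(2*kl.2)) :=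
    tsum_mul_tsum_eq_tsum_sum_antidiagonal_of_summable_norm
      (summable_norm_I1dterm r) (summable_norm_I0term r)
  have hprod2 : I1 r * I1 r = ∑' n : ℕ,
      ∑ kl ∈ Finset.HasAntidiagonal.antidiagonal n,
        (A kl.1 * r^(2*kl.1+1)) * (A kl.2 * r^(2*kl.2+1)) :=
    tsum_mul_tsum_eq_tsum_sum_antidiagonal_of_summable_norm
      (summable_norm_I1term r) (summable_norm_I1term r)
  have h1 : ∀ n : ℕ, (∑ kl ∈ Finset.HasAntidiagonal.antidiagonal n,
        (A kl.1 * ((2*(kl.1:ℝ)+1) * r^(2*kl.1))) * (B kl.2 * r^(2*kl.2)))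
      = Pc n * r^(2*n) := by
    intro n
    rw [Finset.Nat.sum_antidiagonal_eq_sum_range_succ_mk]
    unfold Pc
    rw [sum_mul]
    apply sum_congr rfl
    intro j hj
    rw [Finset.mem_range] at hj
    have he : r^(2*j) * r^(2*(n-j)) = r^(2*n) := by
      rw [← pow_add]; congr 1; omega
    calc (A j * ((2*(j:ℝ)+1) * r^(2*j))) * (B (n-j) * r^(2*(n-j)))
        = A j * (2*(j:ℝ)+1) * B (n-j) * (r^(2*j) * r^(2*(n-j))) := by ring
      _ = A j * (2*(j:ℝ)+1) * B (n-j) * r^(2*n) := by rw [he]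
  have h2 : ∀ n : ℕ, (∑ kl ∈ Finset.HasAntidiagonal.antidiagonal n,
        (A kl.1 * r^(2*kl.1+1)) * (A kl.2 * r^(2*kl.2+1)))
      = Qc n * r^(2*n+2) := by
    intro n
    rw [Finset.Nat.sum_antidiagonal_eq_sum_range_succ_mk]
    unfold Qc
    rw [sum_mul]
    apply sum_congr rfl
    intro j hj
    rw [Finset.mem_range] at hj
    have he : r^(2*j+1) * r^(2*(n-j)+1) = r^(2*n+2) := by
      rw [← pow_add]; congr 1; omega
    calc (A j * r^(2*j+1)) * (A (n-j) * r^(2*(n-j)+1))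
        = A j * A (n-j) * (r^(2*j+1) * r^(2*(n-j)+1)) := by ring
      _ = A j * A (n-j) * r^(2*n+2) := by rw [he]
  -- summabilities
  have SP : Summable (fun n : ℕ => Pc n * r^(2*n)) := by
    have := (summable_norm_sum_mul_antidiagonal_of_summable_norm
      (summable_norm_I1dterm r) (summable_norm_I0term r)).of_norm
    exact this.congr h1
  have SQ : Summable (fun n : ℕ => Qc n * r^(2*n+2)) := by
    have := (summable_norm_sum_mul_antidiagonal_of_summable_norm
      (summable_norm_I1term r) (summable_norm_I1term r)).of_norm
    exact this.congr h2
  have SP' : Summable (fun n : ℕ => Pc (n+1) * r^(2*(n+1))) := by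
    exact_mod_cast (summable_nat_add_iff 1).2 SP
  have hW : I1d r * I0 r - I1 r * I1 r
      = Pc 0 + ∑' n : ℕ, (Pc (n+1) * r^(2*(n+1)) - Qc n * r^(2*n+2)) := by
    rw [hprod1, hprod2, tsum_congr h1, tsum_congr h2]
    rw [Summable.tsum_eq_zero_add SP]
    rw [Summable.tsum_sub SP' SQ]
    simp only [Nat.mul_zero, pow_zero, mul_one]
    ring
  rw [hW]
  have hPc0 : 0 < Pc 0 := by
    unfold Pc
    rw [show (0:ℕ)+1 = 1 from rfl, Finset.range_one, Finset.sum_singleton]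
    simp only [Nat.sub_self, Nat.cast_zero]
    nlinarith [A_pos 0, B_pos 0]
  have hterm : ∀ n : ℕ, 0 ≤ Pc (n+1) * r^(2*(n+1)) - Qc n * r^(2*n+2) := by
    intro n
    have he : 2*(n+1) = 2*n+2 := by omega
    rw [he, ← sub_mul]
    apply mul_nonneg
    · have := PQ n
      have hw := w_pos (n+1)
      rw [this]
      have hcast : ((n:ℝ)+1) = ((n+1 : ℕ) : ℝ) := by push_cast; ring
      rw [hcast]
      exact hw.le
    · have he2 : 2*n+2 = 2*(n+1) := by omega
      rw [he2, pow_mul]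
      positivity
  have : 0 ≤ ∑' n : ℕ, (Pc (n+1) * r^(2*(n+1)) - Qc n * r^(2*n+2)) := tsum_nonneg hterm
  linarith

end RP0aux

open RP0aux
theorem rP0_strictMono :
    StrictMonoOn (fun r : ℝ => r * P 0 r) (Set.Ioi 0) := by
  have hder : ∀ r : ℝ, HasDerivAt (fun x => I1 x / I0 x)
      ((I1d r * I0 r - I1 r * I1 r) / (I0 r)^2) r := by
    intro r
    exact (hasDerivAt_I1 r).div (hasDerivAt_I0 r) (I0_pos r).ne'
  have hmono : StrictMono (fun x => I1 x / I0 x) := by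
    apply strictMono_of_deriv_pos
    intro x
    rw [(hder x).deriv]
    exact div_pos (W_pos x) (pow_pos (I0_pos x) 2)
  have key : ∀ x : ℝ, 0 < x → x * P 0 x = I1 x / I0 x := by
    intro x hx
    have h01 : (0:ℕ) + 1 = 1 := rfl
    simp only [P, h01, besselI_one, besselI_zero]
    rw [mul_div_assoc']
    exact mul_div_mul_left (I1 x) (I0 x) hx.ne'
  intro a ha b hb hab
  simp only
  rw [key a (mem_Ioi.mp ha), key b (mem_Ioi.mp hb)]
  exact hmono hab
end
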